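/- Let p ≥ 0, let ω be positive semidefinite, and let σ be a positive semidefinite real symmetric d×d matrix that is singular (rank(σ) < d). If μ is a probability measure on the real symmetric d×d matrices with ∫ exp(-tr(u ξ)) dμ(ξ) = det(I + σu)^{-p} · exp(-tr(u (I + σu)^{-1} ω)) for all positive semidefinite u, then μ is not absolutely continuous with respect to Lebesgue measure on the space of real symmetric d×d matrices. -/

import Mathlib

open MeasureTheory Matrix

attribute [local instance] Matrix.normedAddCommGroup Matrix.normedSpace

noncomputable instance matrixMeasurableSpace (d : ℕ) :
    MeasurableSpace (Matrix (Fin d) (Fin d) ℝ) := borel _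

instance matrixBorelSpace (d : ℕ) : BorelSpace (Matrix (Fin d) (Fin d) ℝ) := ⟨rfl⟩

/-- The space `S_d` of real symmetric `d×d` matrices, as a subspace of all `d×d` matrices. -/
def symMatrices (d : ℕ) : Submodule ℝ (Matrix (Fin d) (Fin d) ℝ) where
  carrier := {A | A.IsSymm}
  add_mem' := fun ha hb => ha.add hb
  zero_mem' := Matrix.isSymm_zero
  smul_mem' := fun c _ h => h.smul c

instance symMatricesLocallyCompactSpace (d : ℕ) : LocallyCompactSpace (symMatrices d) :=
  locallyCompact_of_proper

/-- If `σ` is positive semidefinite and singular (`rank σ < d`), `ω` is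
positive semidefinite and `μ` is a probability measure on the symmetric `d×d` matrices with
the Laplace transform of `Γ(p, ω; σ)`, then `μ` is not absolutely continuous with respect
to Lebesgue (Haar) measure on the vector space of symmetric matrices. -/
theorem wishart_not_absolutely_continuous_of_singular_scale {d : ℕ} (p : ℝ) (hp : 0 ≤ p)
    (ω σ : Matrix (Fin d) (Fin d) ℝ) (hω : ω.PosSemidef) (hσ : σ.PosSemidef)
    (hσrank : σ.rank < d)
    (μ : Measure (symMatrices d)) [IsProbabilityMeasure μ]
    (hlaplace : ∀ u : Matrix (Fin d) (Fin d) ℝ, u.PosSemidef →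
      ∫ ξ, Real.exp (-(u * ξ.val).trace) ∂μ =
        (1 + σ * u).det ^ (-p) * Real.exp (-(u * (1 + σ * u)⁻¹ * ω).trace)) :
    ¬ μ ≪ (Measure.addHaar : Measure (symMatrices d)) := by
  intro hac
  -- a nonzero kernel vector of σ
  obtain ⟨v, hv0, hvker⟩ : ∃ v : Fin d → ℝ, v ≠ 0 ∧ σ *ᵥ v = 0 := by
    by_contra h
    push_neg at h
    have hinj : Function.Injective σ.mulVecLin := by
      rw [← LinearMap.ker_eq_bot, Submodule.eq_bot_iff]
      intro w hw
      by_contra hw0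
      exact absurd (LinearMap.mem_ker.mp hw) (h w hw0)
    have hfr := LinearMap.finrank_range_of_inj hinj
    simp [Matrix.rank, hfr] at hσrank
  set u₁ := vecMulVec v v with hu₁def
  have hu₁sym : u₁.IsSymm := by ext i j; simp [hu₁def, vecMulVec_apply, mul_comm]
  have hu₁ : u₁.PosSemidef := by
    refine Matrix.PosSemidef.of_dotProduct_mulVec_nonneg hu₁sym fun x => ?_
    have h1 : u₁ *ᵥ x = (v ⬝ᵥ x) • v := by
      ext i
      simp only [hu₁def, vecMulVec_apply, mulVec, dotProduct, Pi.smul_apply, smul_eq_mul,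
        Finset.sum_mul, Finset.mul_sum]
      congr 1; ext k; ring
    rw [h1, dotProduct_smul, star_trivial, smul_eq_mul, dotProduct_comm x v]
    exact mul_self_nonneg _
  have hσu : ∀ u : Matrix (Fin d) (Fin d) ℝ, (∃ t : ℝ, u = t • u₁) → σ * u = 0 := by
    rintro u ⟨t, rfl⟩
    rw [Matrix.mul_smul]
    refine smul_eq_zero_of_right t ?_
    ext i j
    have h := congrFun hvker i
    simp only [mulVec, dotProduct, Pi.zero_apply] at h
    simp only [mul_apply, hu₁def, vecMulVec_apply, Matrix.zero_apply, ← mul_assoc,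
      ← Finset.sum_mul, h, zero_mul]
  -- the RHS simplifies when σ * u = 0
  have hR : ∀ u : Matrix (Fin d) (Fin d) ℝ, σ * u = 0 →
      (1 + σ * u).det ^ (-p) * Real.exp (-(u * (1 + σ * u)⁻¹ * ω).trace) =
        Real.exp (-(u * ω).trace) := by
    intro u h
    have hone : (1 : Matrix (Fin d) (Fin d) ℝ)⁻¹ = 1 := by
      rw [Matrix.inv_eq_left_inv (one_mul (1 : Matrix (Fin d) (Fin d) ℝ))]
    rw [h, add_zero, Matrix.det_one, Real.one_rpow, hone, Matrix.mul_one, one_mul]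
  set c : ℝ := (u₁ * ω).trace with hc
  -- the linear functional ξ ↦ tr (u₁ ξ)
  set L : symMatrices d →ₗ[ℝ] ℝ :=
    { toFun := fun ξ => (u₁ * ξ.val).trace
      map_add' := fun ξ η => by
        simp [Matrix.mul_add, Matrix.trace_add]
      map_smul' := fun t ξ => by
        simp [Matrix.mul_smul, Matrix.trace_smul] } with hL
  have hLcont : Continuous L := L.continuous_of_finiteDimensional
  set Y : symMatrices d → ℝ := fun ξ => Real.exp (-(L ξ)) with hYdef
  have hYcont : Continuous Y := Real.continuous_exp.comp hLcont.neg
  have h1 : ∫ ξ, Y ξ ∂μ = Real.exp (-c) := by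
    have := hlaplace u₁ hu₁
    rw [hR u₁ (hσu u₁ ⟨1, (one_smul _ _).symm⟩)] at this
    exact this
  have h2 : ∫ ξ, (Y ξ) ^ 2 ∂μ = Real.exp (-c) ^ 2 := by
    have := hlaplace (u₁ + u₁) (hu₁.add hu₁)
    rw [hR (u₁ + u₁) (hσu _ ⟨2, (two_smul _ _).symm⟩)] at this
    have hl : (fun ξ : symMatrices d => Real.exp (-((u₁ + u₁) * ξ.val).trace)) =
        fun ξ => (Y ξ) ^ 2 := by
      funext ξ
      simp only [hYdef, Matrix.add_mul, Matrix.trace_add, pow_two, ← Real.exp_add]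
      congr 1
      simp only [hL, LinearMap.coe_mk, AddHom.coe_mk]
      ring
    rw [hl] at this
    rw [this, Matrix.add_mul, Matrix.trace_add, pow_two, ← Real.exp_add]
    congr 1
    ring
  -- integrability
  have hYi : Integrable Y μ := by
    by_contra h
    rw [integral_undef h] at h1
    exact (Real.exp_pos (-c)).ne h1
  have hY2i : Integrable (fun ξ => (Y ξ) ^ 2) μ := by
    by_contra h
    rw [integral_undef h] at h2
    exact (pow_pos (Real.exp_pos (-c)) 2).ne h2
  -- the quadratic is a.e. zero
  set g : symMatrices d → ℝ := fun ξ => (Y ξ - Real.exp (-c)) ^ 2 with hg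
  have hgeq : g = fun ξ =>
      (Y ξ) ^ 2 - (2 * Real.exp (-c)) * Y ξ + Real.exp (-c) ^ 2 := by
    funext ξ; simp only [hg]; ring
  have hgi : Integrable g μ := by
    rw [hgeq]
    exact (hY2i.sub (hYi.const_mul _)).add (integrable_const _)
  have hgint : ∫ ξ, g ξ ∂μ = 0 := by
    rw [hgeq]
    have hmuli : Integrable (fun ξ => 2 * Real.exp (-c) * Y ξ) μ := hYi.const_mul _
    have hsubi : Integrable (fun ξ => Y ξ ^ 2 - 2 * Real.exp (-c) * Y ξ) μ := hY2i.sub hmuli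
    rw [integral_add hsubi (integrable_const (Real.exp (-c) ^ 2)),
      integral_sub hY2i hmuli, integral_const_mul, h1, h2, integral_const]
    simp [measure_univ]
    ring
  have hae : ∀ᵐ ξ ∂μ, L ξ = c := by
    have h0 : g =ᵐ[μ] 0 := (integral_eq_zero_iff_of_nonneg
      (fun ξ => sq_nonneg _) hgi).mp hgint
    filter_upwards [h0] with ξ hξ
    have hsq : (Y ξ - Real.exp (-c)) ^ 2 = 0 := hξ
    have hYe : Y ξ = Real.exp (-c) := sub_eq_zero.mp ((pow_eq_zero_iff two_ne_zero).mp hsq)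
    have := Real.exp_eq_exp.mp hYe
    linarith [neg_inj.mp this]
  -- the level set of L
  set S : Set (symMatrices d) := {ξ | L ξ = c} with hS
  have hμSc : μ Sᶜ = 0 := by
    have h := ae_iff.mp hae
    simpa [hS, Set.compl_setOf] using h
  -- S is contained in a proper affine subspace
  have hLne : L ≠ 0 := by
    intro h0
    have hmem : u₁ ∈ symMatrices d := hu₁sym
    have : L ⟨u₁, hmem⟩ = 0 := by rw [h0]; rfl
    have htr : (u₁ * u₁).trace = (v ⬝ᵥ v) ^ 2 := by
      simp only [hu₁def, Matrix.trace, Matrix.diag, mul_apply, vecMulVec_apply, dotProduct,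
        pow_two, Finset.sum_mul, Finset.mul_sum]
      rw [Finset.sum_comm]
      congr 1; ext i; congr 1; ext j; ring
    have hvv : v ⬝ᵥ v ≠ 0 := fun h => hv0 (dotProduct_self_eq_zero.mp h)
    have : (v ⬝ᵥ v) ^ 2 = 0 := by
      rw [← htr]
      simpa [hL] using this
    exact hvv ((pow_eq_zero_iff two_ne_zero).mp this)
  have hμS : μ S = 0 := by
    refine hac ?_
    rcases Set.eq_empty_or_nonempty S with hSe | ⟨ξ₀, hξ₀⟩
    · simp [hSe]
    · have hSaff : S = (AffineSubspace.mk' ξ₀ (LinearMap.ker L) : Set (symMatrices d)) := by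
        ext ξ
        rw [SetLike.mem_coe, AffineSubspace.mem_mk', vsub_eq_sub,
          LinearMap.mem_ker, map_sub]
        have hc0 : L ξ₀ = c := hξ₀
        constructor
        · intro h; rw [hS] at h; simp only [Set.mem_setOf_eq] at h; rw [h, hc0, sub_self]
        · intro h; rw [hS]; simp only [Set.mem_setOf_eq]
          have := sub_eq_zero.mp h
          rw [this, hc0]
      rw [hSaff]
      haveI : @BorelSpace (symMatrices d) (@UniformSpace.toTopologicalSpace _
          (@PseudoMetricSpace.toUniformSpace _ (@SeminormedAddCommGroup.toPseudoMetricSpace _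
            (@NormedAddCommGroup.toSeminormedAddCommGroup _ inferInstance)))) _ :=
        @Subtype.borelSpace _ _ _ (matrixBorelSpace d) _
      have hi : (Measure.addHaar : Measure (symMatrices d)).IsAddHaarMeasure := inferInstance
      refine @Measure.addHaar_affineSubspace _ _ _ _ this _ _ hi _ ?_
      intro htop
      apply hLne
      rw [← LinearMap.ker_eq_top, ← AffineSubspace.direction_mk' ξ₀ (LinearMap.ker L), htop]
      exact AffineSubspace.direction_top ℝ _ _
  have hle : μ Set.univ ≤ 0 := by
    calc μ Set.univ = μ (S ∪ Sᶜ) := by rw [Set.union_compl_self]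
    _ ≤ μ S + μ Sᶜ := measure_union_le _ _
    _ = 0 := by rw [hμS, hμSc, add_zero]
  rw [measure_univ] at hle
  exact absurd hle (by simp)
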